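/- Let m, d ≥ 1, let A ⊆ Sym(m) be a set of permutations of {1,...,m}, and let S ⊆ 𝒫({1,...,m}) be a set system with the property that for every σ ∈ A and every k ≤ m, the initial image set {σ(1), σ(2), ..., σ(k)} belongs to S. Suppose there exists a d-element subset J = {j_1 < ... < j_d} ⊆ {1,...,m} such that the restrictions of the permutations in A to J realize all d! relative order patterns on J (i.e., for every bijection τ of J there is σ ∈ A whose induced order on J agrees with τ). Then S shatters J: for every K ⊆ J there exists a set s ∈ S with s ∩ J = K. -/

import Mathlib

theorem stmt_3 (m d : ℕ) (hm : 1 ≤ m) (hd : 1 ≤ d)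
    (A : Set (Equiv.Perm (Fin m))) (S : Set (Set (Fin m)))
    (J : Finset (Fin m)) (hJ : J.card = d)
    (hS : ∀ σ ∈ A, ∀ k : ℕ, k ≤ m → (σ '' {i : Fin m | (i : ℕ) < k}) ∈ S)
    (hpat : ∀ e : Fin d → Fin m, Function.Injective e → (∀ i, e i ∈ J) →
      ∃ σ ∈ A, ∀ i j : Fin d, i < j → σ.symm (e i) < σ.symm (e j)) :
    ∀ K ⊆ J, ∃ s ∈ S, s ∩ (J : Set (Fin m)) = (K : Set (Fin m)) := by
  intro K hKJ
  set r := K.card with hr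
  have hKd : r ≤ d := hJ ▸ Finset.card_le_card hKJ
  set l : List (Fin m) := K.toList ++ (J \ K).toList with hl
  have hlenK : K.toList.length = r := Finset.length_toList _
  have hlen : l.length = d := by
    simp only [hl, List.length_append, Finset.length_toList,
      Finset.card_sdiff_of_subset hKJ, hJ]
    omega
  have hnodup : l.Nodup := by
    refine List.Nodup.append (Finset.nodup_toList _) (Finset.nodup_toList _) ?_
    intro x hx hx2
    simp only [Finset.mem_toList, Finset.mem_sdiff] at hx hx2
    exact hx2.2 hx
  set e : Fin d → Fin m := fun i => l.get (Fin.cast hlen.symm i) with he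
  have hinj : Function.Injective e := by
    intro a b hab
    have := (List.nodup_iff_injective_get.mp hnodup) hab
    simpa [Fin.ext_iff] using this
  have hmemJ : ∀ i, e i ∈ J := by
    intro i
    have : e i ∈ l := List.get_mem _ _
    simp only [hl, List.mem_append, Finset.mem_toList, Finset.mem_sdiff] at this
    rcases this with h | h
    · exact hKJ h
    · exact h.1
  have hKiff : ∀ i : Fin d, e i ∈ K ↔ (i : ℕ) < r := by
    intro i
    constructor
    · intro h
      by_contra hlt
      push_neg at hlt
      have hi2 : (i : ℕ) - r < (J \ K).toList.length := by
        simp only [Finset.length_toList, Finset.card_sdiff_of_subset hKJ, hJ]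
        omega
      have : e i = (J \ K).toList.get ⟨(i : ℕ) - r, hi2⟩ := by
        simp only [he, hl, List.get_eq_getElem]
        rw [List.getElem_append_right (by simp [Fin.coe_cast]; omega)]
        simp [hlenK, Fin.coe_cast]
      rw [this] at h
      have : (J \ K).toList.get ⟨(i : ℕ) - r, hi2⟩ ∈ J \ K := by
        rw [← Finset.mem_toList]; exact List.get_mem _ _
      rw [Finset.mem_sdiff] at this
      exact this.2 h
    · intro hlt
      have hi2 : (i : ℕ) < K.toList.length := by omega
      have : e i = K.toList.get ⟨(i : ℕ), hi2⟩ := by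
        simp only [he, hl, List.get_eq_getElem]
        rw [List.getElem_append_left (by simp [Fin.coe_cast]; omega)]
        simp [Fin.coe_cast]
      rw [this, ← Finset.mem_toList]
      exact List.get_mem _ _
  obtain ⟨σ, hσA, hmono⟩ := hpat e hinj hmemJ
  have hsm : StrictMono (fun i => σ.symm (e i)) := fun i j h => hmono i j h
  rcases Nat.eq_zero_or_pos r with hr0 | hrpos
  · -- K empty
    have hKe : K = ∅ := Finset.card_eq_zero.mp hr0
    refine ⟨σ '' {i : Fin m | (i : ℕ) < 0}, hS σ hσA 0 (by omega), ?_⟩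
    have : {i : Fin m | (i : ℕ) < 0} = ∅ := by ext x; simp
    rw [this]
    simp [hKe]
  · have hp : r - 1 < d := by omega
    set p : Fin d := ⟨r - 1, hp⟩ with hpdef
    set k : ℕ := (σ.symm (e p) : ℕ) + 1 with hk
    refine ⟨σ '' {i : Fin m | (i : ℕ) < k}, hS σ hσA k (by have := (σ.symm (e p)).isLt; omega), ?_⟩
    ext x
    simp only [Set.mem_inter_iff, Set.mem_image, Set.mem_setOf_eq,
      Finset.coe_sort_coe, Finset.mem_coe]
    constructor
    · rintro ⟨⟨y, hy, hyx⟩, hxJ⟩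
      obtain ⟨i, hi⟩ : ∃ i, e i = x := by
        have : x ∈ l := by
          simp only [hl, List.mem_append, Finset.mem_toList, Finset.mem_sdiff]
          by_cases hxK : x ∈ K
          · exact Or.inl hxK
          · exact Or.inr ⟨hxJ, hxK⟩
        obtain ⟨⟨j, hjl⟩, hjx⟩ := List.mem_iff_get.mp this
        exact ⟨⟨j, by omega⟩, by simpa [he] using hjx⟩
      have hy' : σ.symm x = y := by rw [← hyx]; simp
      have : (σ.symm (e i) : ℕ) < k := by rw [hi, hy']; exact hy
      have hle : σ.symm (e i) ≤ σ.symm (e p) := by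
        rw [Fin.le_iff_val_le_val]; omega
      have : i ≤ p := hsm.le_iff_le.mp hle
      rw [← hi, hKiff]
      have : (i : ℕ) ≤ r - 1 := this
      omega
    · intro hxK
      have hxJ := hKJ hxK
      obtain ⟨i, hi⟩ : ∃ i, e i = x := by
        have : x ∈ l := by
          simp only [hl, List.mem_append, Finset.mem_toList]
          exact Or.inl hxK
        obtain ⟨⟨j, hjl⟩, hjx⟩ := List.mem_iff_get.mp this
        exact ⟨⟨j, by omega⟩, by simpa [he] using hjx⟩
      refine ⟨⟨σ.symm x, ?_, by simp⟩, hxJ⟩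
      have hir : (i : ℕ) < r := (hKiff i).mp (hi ▸ hxK)
      have hip : i ≤ p := by rw [Fin.le_iff_val_le_val]; simp [hpdef]; omega
      have := hsm.monotone hip
      rw [hi] at this
      rw [Fin.le_iff_val_le_val] at this
      omega
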